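/- For every finite simple graph G = (V,E) on n ≥ 2 vertices and every integer t ≥ 1, there exists a (4t·⌈log₂ n⌉ + 4, 1/t)-Two-Separated partition of G. -/

import Mathlib

open SimpleGraph

variable {V : Type*}

/-- A `(t,ε)`-Two-Separated partition of `G`. -/
def IsTSPartition (G : SimpleGraph V) (t : ℕ) (ε : ℝ) (𝒞 : Set (Set V)) (X : Set V) : Prop :=
  Setoid.IsPartition 𝒞 ∧
  (∀ C ∈ 𝒞, ∀ D ∈ 𝒞, C ≠ D → ∀ a b : V, a ∈ C \ X → b ∈ D \ X →
    ∀ w : G.Walk a b, ∃ i : ℕ, i < w.length ∧ w.getVert i ∈ X ∧ w.getVert (i + 1) ∈ X) ∧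
  (∀ C ∈ 𝒞, ∀ u ∈ C, ∀ v ∈ C, G.edist u v ≤ (t : ℕ∞)) ∧
  (∀ C ∈ 𝒞, ((C ∩ X).ncard : ℝ) ≤ ε * (C.ncard : ℝ))

namespace TSAux

variable (G : SimpleGraph V)

/-- Ball of radius `k` around `v` inside `W`, w.r.t. distances in `G`. -/
def ball (W : Set V) (v : V) (k : ℕ) : Set V := {u ∈ W | G.edist v u ≤ (k : ℕ∞)}

/-- The two outer layers of the ball of radius `r+2`. -/
def ann (W : Set V) (v : V) (r : ℕ) : Set V :=
  {u ∈ ball G W v (r + 2) | ((r + 1 : ℕ) : ℕ∞) ≤ G.edist v u}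

lemma ball_subset (W : Set V) (v : V) (k : ℕ) : ball G W v k ⊆ W := fun _ h => h.1

lemma ball_mono (W : Set V) (v : V) {k l : ℕ} (h : k ≤ l) : ball G W v k ⊆ ball G W v l :=
  fun u hu => ⟨hu.1, hu.2.trans (by exact_mod_cast Nat.cast_le.mpr h)⟩

lemma center_mem_ball (W : Set V) {v : V} (hv : v ∈ W) (k : ℕ) : v ∈ ball G W v k :=
  ⟨hv, by simp [SimpleGraph.edist_self]⟩

lemma ann_subset (W : Set V) (v : V) (r : ℕ) : ann G W v r ⊆ ball G W v (r + 2) :=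
  fun _ h => h.1

/-- Ball-carving process: clusters are balls in the remaining vertex set, the annulus
(two outer layers) of each cluster goes into `X`. -/
inductive Carve (t b : ℕ) : Set V → Set (Set V) → Set V → Prop
  | nil : Carve t b ∅ ∅ ∅
  | cons (W : Set V) (v : V) (r : ℕ) (𝒞 : Set (Set V)) (X : Set V)
      (hv : v ∈ W) (hr : r + 2 ≤ b)
      (hcost : ((ann G W v r).ncard : ℝ) ≤ (1 / (t : ℝ)) * ((ball G W v (r + 2)).ncard : ℝ))
      (htail : Carve t b (W \ ball G W v (r + 2)) 𝒞 X) :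
      Carve t b W (insert (ball G W v (r + 2)) 𝒞) (X ∪ ann G W v r)

variable {G}

lemma Carve.cluster_subset {t b : ℕ} {W : Set V} {𝒞 : Set (Set V)} {X : Set V}
    (h : Carve G t b W 𝒞 X) : ∀ C ∈ 𝒞, C ⊆ W := by
  induction h with
  | nil => simp
  | cons W v r 𝒞 X hv hr hcost htail ih =>
    intro C hC
    rcases hC with rfl | hC
    · exact ball_subset G W v _
    · exact (ih C hC).trans Set.diff_subset

lemma Carve.X_subset {t b : ℕ} {W : Set V} {𝒞 : Set (Set V)} {X : Set V}
    (h : Carve G t b W 𝒞 X) : X ⊆ W := by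
  induction h with
  | nil => simp
  | cons W v r 𝒞 X hv hr hcost htail ih =>
    apply Set.union_subset (ih.trans Set.diff_subset)
    exact (ann_subset G W v r).trans (ball_subset G W v _)

lemma Carve.cluster_nonempty {t b : ℕ} {W : Set V} {𝒞 : Set (Set V)} {X : Set V}
    (h : Carve G t b W 𝒞 X) : ∀ C ∈ 𝒞, C.Nonempty := by
  induction h with
  | nil => simp
  | cons W v r 𝒞 X hv hr hcost htail ih =>
    intro C hC
    rcases hC with rfl | hC
    · exact ⟨v, center_mem_ball G W hv _⟩
    · exact ih C hC

lemma Carve.existsUnique {t b : ℕ} {W : Set V} {𝒞 : Set (Set V)} {X : Set V}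
    (h : Carve G t b W 𝒞 X) : ∀ a ∈ W, ∃! C, C ∈ 𝒞 ∧ a ∈ C := by
  induction h with
  | nil => simp
  | cons W v r 𝒞 X hv hr hcost htail ih =>
    intro a ha
    by_cases hab : a ∈ ball G W v (r + 2)
    · refine ⟨ball G W v (r + 2), ⟨Set.mem_insert _ _, hab⟩, ?_⟩
      rintro C ⟨hC, haC⟩
      rcases hC with rfl | hC
      · rfl
      · exact absurd ((htail.cluster_subset C hC) haC).2 (by simp [hab])
    · obtain ⟨C, ⟨hC, haC⟩, hun⟩ := ih a ⟨ha, hab⟩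
      refine ⟨C, ⟨Set.mem_insert_of_mem _ hC, haC⟩, ?_⟩
      rintro D ⟨hD, haD⟩
      rcases hD with rfl | hD
      · exact absurd haD hab
      · exact hun D ⟨hD, haD⟩

lemma Carve.diam {t b : ℕ} {W : Set V} {𝒞 : Set (Set V)} {X : Set V}
    (h : Carve G t b W 𝒞 X) : ∀ C ∈ 𝒞, ∀ u ∈ C, ∀ u' ∈ C,
      G.edist u u' ≤ ((2 * b : ℕ) : ℕ∞) := by
  induction h with
  | nil => simp
  | cons W v r 𝒞 X hv hr hcost htail ih =>
    intro C hC u hu u' hu'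
    rcases hC with rfl | hC
    · calc G.edist u u' ≤ G.edist u v + G.edist v u' := SimpleGraph.edist_triangle
        _ = G.edist v u + G.edist v u' := by rw [SimpleGraph.edist_comm]
        _ ≤ ((r + 2 : ℕ) : ℕ∞) + ((r + 2 : ℕ) : ℕ∞) := add_le_add hu.2 hu'.2
        _ ≤ ((2 * b : ℕ) : ℕ∞) := by
            rw [← Nat.cast_add, Nat.cast_le]
            omega
    · exact ih C hC u hu u' hu'

lemma Carve.cost {t b : ℕ} {W : Set V} {𝒞 : Set (Set V)} {X : Set V}
    (h : Carve G t b W 𝒞 X) : ∀ C ∈ 𝒞,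
      ((C ∩ X).ncard : ℝ) ≤ (1 / (t : ℝ)) * (C.ncard : ℝ) := by
  induction h with
  | nil => simp
  | cons W v r 𝒞 X hv hr hcost htail ih =>
    intro C hC
    rcases hC with rfl | hC
    · have h1 : ball G W v (r + 2) ∩ (X ∪ ann G W v r) = ann G W v r := by
        apply Set.Subset.antisymm
        · rintro x ⟨hx1, hx2⟩
          rcases hx2 with hx2 | hx2
          · exact absurd (htail.X_subset hx2).2 (by simp [hx1])
          · exact hx2
        · intro x hx; exact ⟨hx.1, Or.inr hx⟩
      rw [h1]; exact hcost
    · have h1 : C ∩ (X ∪ ann G W v r) = C ∩ X := by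
        apply Set.Subset.antisymm
        · rintro x ⟨hx1, hx2⟩
          rcases hx2 with hx2 | hx2
          · exact ⟨hx1, hx2⟩
          · exact absurd (ann_subset G W v r hx2)
              (by have := (htail.cluster_subset C hC) hx1; simp_all [Set.mem_diff])
        · exact Set.inter_subset_inter_right C Set.subset_union_left
      rw [h1]; exact ih C hC

/-- Discrete intermediate value: a `≤ +1`-step sequence going from `≤ r+1` up to `≥ r+2`
must take the values `r+1, r+2` at consecutive indices. -/
lemma ivt (f : ℕ → ℕ∞) (hf : ∀ i, f (i + 1) ≤ f i + 1) (r : ℕ) :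
    ∀ k2 k1, k1 ≤ k2 → f k1 ≤ ((r + 1 : ℕ) : ℕ∞) → ((r + 2 : ℕ) : ℕ∞) ≤ f k2 →
    ∃ j, k1 ≤ j ∧ j + 1 ≤ k2 ∧ f j = ((r + 1 : ℕ) : ℕ∞) ∧ f (j + 1) = ((r + 2 : ℕ) : ℕ∞) := by
  intro k2
  induction k2 with
  | zero =>
    intro k1 hk1 h1 h2
    interval_cases k1
    exact absurd (h2.trans h1) (by exact_mod_cast by omega)
  | succ k2 IH =>
    intro k1 hk1 h1 h2
    rcases Nat.lt_or_ge k1 (k2 + 1) with hlt | hge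
    · have hk1' : k1 ≤ k2 := by omega
      by_cases hmid : f k2 ≤ ((r + 1 : ℕ) : ℕ∞)
      · -- j = k2
        have hne : f k2 ≠ ⊤ := ne_top_of_le_ne_top (ENat.coe_ne_top _) hmid
        have hup : f (k2 + 1) ≤ ((r + 2 : ℕ) : ℕ∞) := by
          calc f (k2 + 1) ≤ f k2 + 1 := hf k2
            _ ≤ ((r + 1 : ℕ) : ℕ∞) + 1 := add_le_add hmid le_rfl
            _ = ((r + 2 : ℕ) : ℕ∞) := by push_cast; ring
        have heq2 : f (k2 + 1) = ((r + 2 : ℕ) : ℕ∞) := le_antisymm hup h2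
        have hlow : ((r + 1 : ℕ) : ℕ∞) ≤ f k2 := by
          by_contra hcon
          have h3 : f k2 + 1 ≤ ((r + 1 : ℕ) : ℕ∞) :=
            (ENat.add_one_le_iff hne).mpr (lt_of_not_ge hcon)
          have h4 : ((r + 2 : ℕ) : ℕ∞) ≤ ((r + 1 : ℕ) : ℕ∞) := h2.trans ((hf k2).trans h3)
          exact absurd h4 (by exact_mod_cast by omega)
        exact ⟨k2, hk1', le_refl _, le_antisymm hmid hlow, heq2⟩
      · have hlt2 : ((r + 1 : ℕ) : ℕ∞) < f k2 := lt_of_not_ge hmid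
        have h2' : ((r + 2 : ℕ) : ℕ∞) ≤ f k2 := by
          have h5 := (ENat.add_one_le_iff (n := f k2) (m := ((r + 1 : ℕ) : ℕ∞))
            (ENat.coe_ne_top _)).mpr hlt2
          calc ((r + 2 : ℕ) : ℕ∞) = ((r + 1 : ℕ) : ℕ∞) + 1 := by push_cast; ring
            _ ≤ f k2 := h5
        obtain ⟨j, hj1, hj2, hj3, hj4⟩ := IH k1 hk1' h1 h2'
        exact ⟨j, hj1, hj2.trans (by omega), hj3, hj4⟩
    · -- k1 = k2 + 1 : contradiction
      have : k1 = k2 + 1 := by omega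
      subst this
      exact absurd (h2.trans h1) (by exact_mod_cast by omega)

section Walks

variable {a b' : V} (v : V)

lemma walk_lip (w : G.Walk a b') (i : ℕ) :
    G.edist v (w.getVert (i + 1)) ≤ G.edist v (w.getVert i) + 1 := by
  rcases Nat.lt_or_ge i w.length with hi | hi
  · calc G.edist v (w.getVert (i + 1))
        ≤ G.edist v (w.getVert i) + G.edist (w.getVert i) (w.getVert (i + 1)) :=
          SimpleGraph.edist_triangle
      _ ≤ G.edist v (w.getVert i) + 1 := by
          gcongr
          exact le_of_eq (SimpleGraph.edist_eq_one_iff_adj.mpr (w.adj_getVert_succ hi))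
  · rw [w.getVert_of_length_le hi, w.getVert_of_length_le (by omega)]
    exact le_self_add

lemma walk_lip_rev (w : G.Walk a b') (k : ℕ) (hk : k ≤ w.length) (i : ℕ) :
    G.edist v (w.getVert (k - (i + 1))) ≤ G.edist v (w.getVert (k - i)) + 1 := by
  rcases Nat.lt_or_ge i k with hik | hik
  · have h1 : k - (i + 1) + 1 = k - i := by omega
    have h2 : k - (i + 1) < w.length := by omega
    have hadj := w.adj_getVert_succ h2
    rw [h1] at hadj
    calc G.edist v (w.getVert (k - (i + 1)))
        ≤ G.edist v (w.getVert (k - i)) + G.edist (w.getVert (k - i)) (w.getVert (k - (i + 1))) :=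
          SimpleGraph.edist_triangle
      _ ≤ G.edist v (w.getVert (k - i)) + 1 := by
          gcongr
          exact le_of_eq (SimpleGraph.edist_eq_one_iff_adj.mpr hadj.symm)
  · have h1 : k - (i + 1) = k - i := by omega
    rw [h1]; exact le_self_add

end Walks


/-- Key separation lemma: any walk staying in `Y ∪ W` between two different clusters
(avoiding `Y` at its endpoints) must contain two consecutive vertices of `Y`. -/
lemma Carve.sep {t b : ℕ} {W : Set V} {𝒞 : Set (Set V)} {X : Set V}
    (h : Carve G t b W 𝒞 X) : ∀ Y : Set V, X ⊆ Y →
    ∀ C ∈ 𝒞, ∀ D ∈ 𝒞, C ≠ D → ∀ a b' : V, a ∈ C → b' ∈ D → a ∉ Y → b' ∉ Y →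
    ∀ w : G.Walk a b', (∀ k : ℕ, w.getVert k ∈ Y ∪ W) →
    ∃ i : ℕ, i < w.length ∧ w.getVert i ∈ Y ∧ w.getVert (i + 1) ∈ Y := by
  induction h with
  | nil => simp
  | cons W v r 𝒞 X hv hr hcost htail ih =>
    intro Y hXY C hC D hD hCD a b' haC hbD haY hbY w hw
    set cl := ball G W v (r + 2) with hcl
    -- membership in Y for walk vertices in the annulus range
    have hannY : ann G W v r ⊆ Y := (Set.subset_union_right).trans hXY
    have hmemY : ∀ z : V, z ∈ Y ∪ W → ((r + 1 : ℕ) : ℕ∞) ≤ G.edist v z →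
        G.edist v z ≤ ((r + 2 : ℕ) : ℕ∞) → z ∈ Y := by
      intro z hz h1 h2
      rcases hz with hz | hz
      · exact hz
      · exact hannY ⟨⟨hz, h2⟩, h1⟩
    -- vertices in tail clusters are far from v
    have hout : ∀ E ∈ 𝒞, ∀ z ∈ E, ((r + 3 : ℕ) : ℕ∞) ≤ G.edist v z := by
      intro E hE z hz
      have hzW := htail.cluster_subset E hE hz
      have h1 : ¬ G.edist v z ≤ ((r + 2 : ℕ) : ℕ∞) := by
        intro hle
        exact hzW.2 ⟨hzW.1, hle⟩
      have h2 : ((r + 2 : ℕ) : ℕ∞) < G.edist v z := lt_of_not_ge h1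
      have h3 := (ENat.add_one_le_iff (n := G.edist v z) (m := ((r + 2 : ℕ) : ℕ∞))
        (ENat.coe_ne_top _)).mpr h2
      calc ((r + 3 : ℕ) : ℕ∞) = ((r + 2 : ℕ) : ℕ∞) + 1 := by push_cast; ring
        _ ≤ G.edist v z := h3
    have hr23 : ((r + 2 : ℕ) : ℕ∞) ≤ ((r + 3 : ℕ) : ℕ∞) := by
      rw [Nat.cast_le]; omega
    by_cases hlow : ∃ k : ℕ, k ≤ w.length ∧ G.edist v (w.getVert k) ≤ ((r + 1 : ℕ) : ℕ∞)
    · obtain ⟨k, hk, hdk⟩ := hlow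
      by_cases hDcl : D = cl
      · -- then C is a tail cluster; walk from far vertex a down to level ≤ r+1 at position k
        have hCcl : C ∈ 𝒞 := by
          rcases hC with h' | h'
          · exact absurd (h' ▸ hDcl.symm) hCD
          · exact h'
        have hfar : ((r + 2 : ℕ) : ℕ∞) ≤ G.edist v (w.getVert (k - k)) := by
          simp only [Nat.sub_self, Walk.getVert_zero]
          exact hr23.trans (hout C hCcl a haC)
        obtain ⟨j, hj1, hj2, hj3, hj4⟩ := ivt (fun i => G.edist v (w.getVert (k - i)))
          (fun i => walk_lip_rev v w k hk i) r k 0 (Nat.zero_le _) (by simpa using hdk) hfar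
        refine ⟨k - (j + 1), by omega, ?_, ?_⟩
        · refine hmemY _ (hw _) ?_ (le_of_eq hj4)
          rw [hj4, Nat.cast_le]; omega
        · have hkj : k - (j + 1) + 1 = k - j := by omega
          rw [hkj]
          refine hmemY _ (hw _) (le_of_eq hj3.symm) ?_
          rw [hj3, Nat.cast_le]; omega
      · -- D is a tail cluster; walk from position k up to far vertex b'
        have hDt : D ∈ 𝒞 := by
          rcases hD with h' | h'
          · exact absurd h' hDcl
          · exact h'
        have hfar : ((r + 2 : ℕ) : ℕ∞) ≤ G.edist v (w.getVert w.length) := by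
          rw [Walk.getVert_length]
          exact hr23.trans (hout D hDt b' hbD)
        obtain ⟨j, hj1, hj2, hj3, hj4⟩ := ivt (fun i => G.edist v (w.getVert i))
          (fun i => walk_lip v w i) r w.length k hk hdk hfar
        refine ⟨j, by omega, ?_, ?_⟩
        · refine hmemY _ (hw _) (le_of_eq hj3.symm) ?_
          rw [hj3, Nat.cast_le]; omega
        · refine hmemY _ (hw _) ?_ (le_of_eq hj4)
          rw [hj4, Nat.cast_le]; omega
    · -- all walk vertices are at distance ≥ r+2 : recurse into the tail
      push_neg at hlow
      have hnotin : ∀ z : V, z ∈ Y ∪ W → ¬ G.edist v z ≤ ((r + 1 : ℕ) : ℕ∞) →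
          z ∈ Y ∪ (W \ cl) := by
        intro z hz hzd
        rcases hz with hz | hz
        · exact Or.inl hz
        · by_cases hzc : z ∈ cl
          · left
            refine hannY ⟨hzc, ?_⟩
            have := lt_of_not_ge hzd
            calc ((r + 1 : ℕ) : ℕ∞) ≤ ((r + 1 : ℕ) : ℕ∞) + 1 := le_self_add
              _ ≤ G.edist v z := (ENat.add_one_le_iff (ENat.coe_ne_top _)).mpr this
          · exact Or.inr ⟨hz, hzc⟩
      have hlow' : ∀ k : ℕ, ¬ G.edist v (w.getVert k) ≤ ((r + 1 : ℕ) : ℕ∞) := by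
        intro k
        rcases le_or_gt k w.length with hk | hk
        · exact not_le_of_gt (hlow k hk)
        · rw [w.getVert_of_length_le (le_of_lt hk)]
          have h6 := hlow w.length (le_refl _)
          rw [Walk.getVert_length] at h6
          exact not_le_of_gt h6
      -- endpoints cannot be in the head cluster
      have hCt : C ∈ 𝒞 := by
        rcases hC with h' | h'
        · exfalso
          have h0 := hlow' 0
          rw [Walk.getVert_zero] at h0
          have haCl : a ∈ cl := by rw [← h']; exact haC
          have hnotann : a ∉ ann G W v r := fun hc => haY (hannY hc)
          have h5 : ¬ ((r + 1 : ℕ) : ℕ∞) ≤ G.edist v a := fun hc => hnotann ⟨haCl, hc⟩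
          exact h0 (le_of_lt (lt_of_not_ge h5))
        · exact h'
      have hDt : D ∈ 𝒞 := by
        rcases hD with h' | h'
        · exfalso
          have h0 := hlow' w.length
          rw [Walk.getVert_length] at h0
          have hbCl : b' ∈ cl := by rw [← h']; exact hbD
          have hnotann : b' ∉ ann G W v r := fun hc => hbY (hannY hc)
          have h5 : ¬ ((r + 1 : ℕ) : ℕ∞) ≤ G.edist v b' := fun hc => hnotann ⟨hbCl, hc⟩
          exact h0 (le_of_lt (lt_of_not_ge h5))
        · exact h'
      exact ih Y ((Set.subset_union_left).trans hXY) C hCt D hDt hCD a b' haC hbD haY hbY w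
        (fun k => hnotin _ (hw k) (hlow' k))


lemma ann_eq (W : Set V) (v : V) (r : ℕ) :
    ann G W v r = ball G W v (r + 2) \ ball G W v r := by
  ext u
  simp only [ann, ball, Set.mem_setOf_eq, Set.mem_diff]
  constructor
  · rintro ⟨⟨h1, h2⟩, h3⟩
    refine ⟨⟨h1, h2⟩, ?_⟩
    rintro ⟨-, h4⟩
    have : ((r + 1 : ℕ) : ℕ∞) ≤ ((r : ℕ) : ℕ∞) := h3.trans h4
    rw [Nat.cast_le] at this
    omega
  · rintro ⟨⟨h1, h2⟩, h3⟩
    refine ⟨⟨h1, h2⟩, ?_⟩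
    have h4 : ¬ G.edist v u ≤ ((r : ℕ) : ℕ∞) := fun hc => h3 ⟨h1, hc⟩
    have h5 := (ENat.add_one_le_iff (n := G.edist v u) (m := ((r : ℕ) : ℕ∞))
      (ENat.coe_ne_top _)).mpr (lt_of_not_ge h4)
    calc ((r + 1 : ℕ) : ℕ∞) = ((r : ℕ) : ℕ∞) + 1 := by push_cast; ring
      _ ≤ G.edist v u := h5

lemma radius_exists [Fintype V] (t : ℕ) (ht : 1 ≤ t) (hn : 2 ≤ Fintype.card V)
    (W : Set V) (v : V) (hv : v ∈ W) :
    ∃ r : ℕ, r + 2 ≤ 2 * t * Nat.clog 2 (Fintype.card V) + 2 ∧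
      ((ann G W v r).ncard : ℝ) ≤ (1 / (t : ℝ)) * ((ball G W v (r + 2)).ncard : ℝ) := by
  set n := Fintype.card V with hn'
  set S := t * Nat.clog 2 n with hS
  have hclog : 0 < Nat.clog 2 n := Nat.clog_pos one_lt_two hn
  have hS1 : 1 ≤ S := Nat.one_le_iff_ne_zero.mpr (by positivity)
  set g : ℕ → ℕ := fun s => (ball G W v (2 * s)).ncard with hg
  have ht0 : (0 : ℝ) < (t : ℝ) := by exact_mod_cast ht
  have htinv : (0 : ℝ) ≤ 1 / (t : ℝ) := by positivity
  have hg1 : 1 ≤ g 0 := by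
    have : (ball G W v 0).Nonempty := ⟨v, center_mem_ball G W hv 0⟩
    have h7 := (Set.ncard_pos (s := ball G W v 0) (Set.toFinite _)).mpr this
    exact h7
  have hgmono : ∀ s, g s ≤ g (s + 1) := fun s =>
    Set.ncard_le_ncard (ball_mono G W v (by omega)) (Set.toFinite _)
  have hgn : ∀ s, g s ≤ n := fun s => by
    have := Set.ncard_le_ncard (Set.subset_univ (ball G W v (2 * s))) (Set.toFinite _)
    simpa [Set.ncard_univ, hn'] using this
  -- find a good radius
  have key : ∃ s, s < S ∧ ((g (s + 1) : ℝ) ≤ (1 + 1 / (t : ℝ)) * (g s : ℝ)) := by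
    by_contra hcon
    push_neg at hcon
    have step : ∀ s, s < S → (1 + 1 / (t : ℝ)) * (g s : ℝ) < (g (s + 1) : ℝ) := fun s hs =>
      hcon s hs
    have grow : ∀ s, 1 ≤ s → s ≤ S → (1 + 1 / (t : ℝ)) ^ s < (g s : ℝ) := by
      intro s
      induction s with
      | zero => omega
      | succ s IH =>
        intro h1 h2
        rcases Nat.eq_or_lt_of_le h1 with h1' | h1'
        · have h3 := step 0 (by omega)
          have h4 : (1 : ℝ) ≤ (g 0 : ℝ) := by exact_mod_cast hg1
          have h5 : (0 : ℝ) < 1 + 1 / (t : ℝ) := by positivity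
          rw [← h1']
          calc (1 + 1 / (t : ℝ)) ^ 1 = (1 + 1 / (t : ℝ)) * 1 := by ring
            _ ≤ (1 + 1 / (t : ℝ)) * (g 0 : ℝ) := by gcongr
            _ < (g 1 : ℝ) := step 0 (by omega)
        · have hs1 : 1 ≤ s := by omega
          have IH' := IH hs1 (by omega)
          have h5 : (0 : ℝ) < 1 + 1 / (t : ℝ) := by positivity
          calc (1 + 1 / (t : ℝ)) ^ (s + 1) = (1 + 1 / (t : ℝ)) * (1 + 1 / (t : ℝ)) ^ s := by ring
            _ < (1 + 1 / (t : ℝ)) * (g s : ℝ) := by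
                exact mul_lt_mul_of_pos_left IH' h5
            _ < (g (s + 1) : ℝ) := step s (by omega)
    have hfin := grow S hS1 (le_refl _)
    have h2t : (2 : ℝ) ≤ (1 + 1 / (t : ℝ)) ^ t := by
      have := one_add_mul_le_pow (a := 1 / (t : ℝ)) (by linarith) t
      have ht1 : (t : ℝ) * (1 / (t : ℝ)) = 1 := by field_simp
      calc (2 : ℝ) = 1 + (t : ℝ) * (1 / (t : ℝ)) := by rw [ht1]; ring
        _ ≤ (1 + 1 / (t : ℝ)) ^ t := this
    have hnle : (n : ℝ) ≤ (1 + 1 / (t : ℝ)) ^ S := by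
      have h6 : (n : ℝ) ≤ (2 : ℝ) ^ Nat.clog 2 n := by
        exact_mod_cast Nat.le_pow_clog one_lt_two n
      calc (n : ℝ) ≤ (2 : ℝ) ^ Nat.clog 2 n := h6
        _ ≤ ((1 + 1 / (t : ℝ)) ^ t) ^ Nat.clog 2 n := by
            exact pow_le_pow_left₀ (by norm_num) h2t _
        _ = (1 + 1 / (t : ℝ)) ^ S := by rw [← pow_mul, hS]
    have hgS : (g S : ℝ) ≤ (n : ℝ) := by exact_mod_cast hgn S
    linarith
  obtain ⟨s, hsS, hok⟩ := key
  refine ⟨2 * s, ?_, ?_⟩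
  · have h7 : 2 * t * Nat.clog 2 n = 2 * S := by rw [hS]; ring
    omega
  have hsub : ball G W v (2 * s) ⊆ ball G W v (2 * s + 2) := ball_mono G W v (by omega)
  have hdiff : (ann G W v (2 * s)).ncard = (ball G W v (2 * s + 2)).ncard
      - (ball G W v (2 * s)).ncard := by
    rw [ann_eq]
    exact Set.ncard_diff hsub (Set.toFinite _)
  have hb2 : ball G W v (2 * s + 2) = ball G W v (2 * (s + 1)) := by ring_nf
  have hle : g s ≤ g (s + 1) := hgmono s
  have hcast : ((ann G W v (2 * s)).ncard : ℝ) = (g (s + 1) : ℝ) - (g s : ℝ) := by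
    rw [hdiff, hb2]
    have : (ball G W v (2 * (s + 1))).ncard = g (s + 1) := rfl
    rw [this]
    have : (ball G W v (2 * s)).ncard = g s := rfl
    rw [this]
    exact Nat.cast_sub hle
  rw [hcast, hb2]
  have hgs2 : ((ball G W v (2 * (s + 1))).ncard : ℝ) = (g (s + 1) : ℝ) := rfl
  rw [hgs2]
  have hmul : (1 / (t : ℝ)) * (g s : ℝ) ≤ (1 / (t : ℝ)) * (g (s + 1) : ℝ) := by
    have : (g s : ℝ) ≤ (g (s + 1) : ℝ) := by exact_mod_cast hle
    exact mul_le_mul_of_nonneg_left this htinv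
  nlinarith [hok, hmul]

lemma carve_exists [Fintype V] (t : ℕ) (ht : 1 ≤ t) (hn : 2 ≤ Fintype.card V) :
    ∀ N : ℕ, ∀ W : Set V, W.ncard ≤ N →
      ∃ 𝒞 X, Carve G t (2 * t * Nat.clog 2 (Fintype.card V) + 2) W 𝒞 X := by
  intro N
  induction N with
  | zero =>
    intro W hW
    have : W = ∅ := by
      rw [← Set.ncard_eq_zero (W.toFinite)]; omega
    subst this
    exact ⟨∅, ∅, Carve.nil⟩
  | succ N IH =>
    intro W hW
    rcases W.eq_empty_or_nonempty with rfl | ⟨v, hv⟩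
    · exact ⟨∅, ∅, Carve.nil⟩
    obtain ⟨r, hr, hcost⟩ := radius_exists t ht hn W v hv
    have hlt : (W \ ball G W v (r + 2)).ncard < W.ncard := by
      apply Set.ncard_lt_ncard _ (W.toFinite)
      constructor
      · exact Set.diff_subset
      · intro hsub
        exact (hsub hv).2 (center_mem_ball G W hv (r + 2))
    obtain ⟨𝒞, X, hc⟩ := IH (W \ ball G W v (r + 2)) (by omega)
    exact ⟨_, _, Carve.cons W v r 𝒞 X hv hr hcost hc⟩

end TSAux

theorem stmt6 [Fintype V] (G : SimpleGraph V) (t : ℕ) (ht : 1 ≤ t)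
    (hn : 2 ≤ Fintype.card V) :
    ∃ (𝒞 : Set (Set V)) (X : Set V),
      IsTSPartition G (4 * t * Nat.clog 2 (Fintype.card V) + 4) (1 / (t : ℝ)) 𝒞 X := by
  obtain ⟨𝒞, X, hc⟩ := TSAux.carve_exists (G := G) t ht hn (Set.univ).ncard Set.univ (le_refl _)
  refine ⟨𝒞, X, ?_, ?_, ?_, ?_⟩
  · constructor
    · intro h0
      exact Set.not_nonempty_empty (hc.cluster_nonempty ∅ h0)
    · intro a
      exact hc.existsUnique a (Set.mem_univ a)
  · intro C hC D hD hne a b hab hbb w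
    exact hc.sep X (subset_refl X) C hC D hD hne a b hab.1 hbb.1 hab.2 hbb.2 w
      (fun k => Or.inr (Set.mem_univ _))
  · intro C hC u hu v hv
    have h1 := hc.diam C hC u hu v hv
    have h2 : 2 * (2 * t * Nat.clog 2 (Fintype.card V) + 2)
        = 4 * t * Nat.clog 2 (Fintype.card V) + 4 := by ring
    rwa [h2] at h1
  · exact hc.cost
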